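/- Let T be a contravariant additive left exact functor on left Λ-modules that commutes with inverse limits (sends direct limits to inverse limits via an isomorphism). If T(I) = 0 for every left ideal I of Λ, then T(A) = 0 for every left Λ-module A. -/

import Mathlib

open CategoryTheory CategoryTheory.Limits

section Aux

variable {Λ : Type} [Ring Λ]

/-- The poset of finitely generated submodules of a module. -/
abbrev FGSub (A : ModuleCat.{0} Λ) : Type := {P : Submodule Λ A // P.FG}

noncomputable instance (A : ModuleCat.{0} Λ) : SemilatticeSup (FGSub A) :=
  Subtype.semilatticeSup fun _ _ h₁ h₂ => h₁.sup h₂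

instance (A : ModuleCat.{0} Λ) : Nonempty (FGSub A) := ⟨⟨⊥, Submodule.fg_bot⟩⟩

/-- The diagram of finitely generated submodules. -/
def fgDiagram (A : ModuleCat.{0} Λ) : FGSub A ⥤ ModuleCat.{0} Λ where
  obj P := ModuleCat.of Λ P.1
  map {P Q} h := ModuleCat.ofHom (Submodule.inclusion (leOfHom h))
  map_id P := by ext x; rfl
  map_comp f g := by ext x; rfl

/-- The cocone over the diagram of f.g. submodules with apex the module itself. -/
def fgCocone (A : ModuleCat.{0} Λ) : Cocone (fgDiagram A) where
  pt := A
  ι :=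
    { app := fun P => ModuleCat.ofHom P.1.subtype
      naturality := fun P Q f => by ext x; rfl }

lemma fg_compat {A : ModuleCat.{0} Λ} (s : Cocone (fgDiagram A)) {P Q : FGSub A}
    (h : P ≤ Q) (x : A) (hx : x ∈ P.1) :
    s.ι.app Q ⟨x, h hx⟩ = s.ι.app P ⟨x, hx⟩ := by
  rw [← s.w (homOfLE h)]
  rfl

/-- The underlying function of the descent map. -/
noncomputable def fgDescFun {A : ModuleCat.{0} Λ} (s : Cocone (fgDiagram A)) (a : A) : s.pt :=
  s.ι.app ⟨Submodule.span Λ {a}, Submodule.fg_span_singleton a⟩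
    ⟨a, Submodule.mem_span_singleton_self a⟩

lemma fgDescFun_eq {A : ModuleCat.{0} Λ} (s : Cocone (fgDiagram A)) (P : FGSub A) (x : A)
    (hx : x ∈ P.1) : fgDescFun s x = s.ι.app P ⟨x, hx⟩ := by
  have h : (⟨Submodule.span Λ {x}, Submodule.fg_span_singleton x⟩ : FGSub A) ≤ P :=
    Submodule.span_le.mpr (by simpa using hx)
  rw [fgDescFun, ← fg_compat s h x (Submodule.mem_span_singleton_self x)]

/-- `fgCocone A` is a colimit cocone. -/
noncomputable def fgIsColimit (A : ModuleCat.{0} Λ) : IsColimit (fgCocone A) where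
  desc s := ModuleCat.ofHom
    { toFun := fgDescFun s
      map_add' := fun a b => by
        have ha : a ∈ Submodule.span Λ {a} ⊔ Submodule.span Λ {b} :=
          Submodule.mem_sup_left (Submodule.mem_span_singleton_self a)
        have hb : b ∈ Submodule.span Λ {a} ⊔ Submodule.span Λ {b} :=
          Submodule.mem_sup_right (Submodule.mem_span_singleton_self b)
        set P : FGSub A := ⟨Submodule.span Λ {a} ⊔ Submodule.span Λ {b},
          (Submodule.fg_span_singleton a).sup (Submodule.fg_span_singleton b)⟩
        rw [fgDescFun_eq s P a ha, fgDescFun_eq s P b hb,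
          fgDescFun_eq s P (a + b) (P.1.add_mem ha hb)]
        have : (⟨a + b, P.1.add_mem ha hb⟩ : P.1) = ⟨a, ha⟩ + ⟨b, hb⟩ := rfl
        rw [this]; exact (s.ι.app P).hom.map_add _ _
      map_smul' := fun r a => by
        show fgDescFun s (r • a) = r • fgDescFun s a
        have ha : a ∈ Submodule.span Λ {a} := Submodule.mem_span_singleton_self a
        set P : FGSub A := ⟨Submodule.span Λ {a}, Submodule.fg_span_singleton a⟩
        rw [fgDescFun_eq s P a ha, fgDescFun_eq s P (r • a) (P.1.smul_mem r ha)]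
        have : (⟨r • a, P.1.smul_mem r ha⟩ : P.1) = r • ⟨a, ha⟩ := rfl
        rw [this]; exact (s.ι.app P).hom.map_smul _ _ }
  fac s P := by
    ext x
    exact fgDescFun_eq s P x.1 x.2
  uniq s m hm := by
    ext a
    have := congrArg (fun (f : (fgDiagram A).obj _ ⟶ s.pt) =>
      f ⟨a, Submodule.mem_span_singleton_self a⟩)
      (hm ⟨Submodule.span Λ {a}, Submodule.fg_span_singleton a⟩)
    exact this

end Aux

section AuxCat

variable {Λ Λ₁ : Type} [Ring Λ] [Ring Λ₁]

lemma aux_mono_zero {C : Type*} [Category C] [HasZeroMorphisms C] {X Y : C}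
    (hY : IsZero Y) (f : X ⟶ Y) [Mono f] : IsZero X := by
  rw [IsZero.iff_id_eq_zero]
  have hf : f = 0 := hY.eq_zero_of_tgt f
  have : 𝟙 X ≫ f = 0 ≫ f := by simp [hf]
  exact (cancel_mono f).mp this

lemma aux_split (T : (ModuleCat.{0} Λ)ᵒᵖ ⥤ ModuleCat.{0} Λ₁) [T.Additive]
    {K N M : Type} [AddCommGroup K] [Module Λ K] [AddCommGroup N] [Module Λ N]
    [AddCommGroup M] [Module Λ M] (e : M ≃ₗ[Λ] K × N)
    (hK : IsZero (T.obj (Opposite.op (ModuleCat.of Λ K))))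
    (hN : IsZero (T.obj (Opposite.op (ModuleCat.of Λ N)))) :
    IsZero (T.obj (Opposite.op (ModuleCat.of Λ M))) := by
  rw [IsZero.iff_id_eq_zero]
  let p1 : ModuleCat.of Λ M ⟶ ModuleCat.of Λ K :=
    ModuleCat.ofHom ((LinearMap.fst Λ K N).comp e.toLinearMap)
  let i1 : ModuleCat.of Λ K ⟶ ModuleCat.of Λ M :=
    ModuleCat.ofHom (e.symm.toLinearMap.comp (LinearMap.inl Λ K N))
  let p2 : ModuleCat.of Λ M ⟶ ModuleCat.of Λ N :=
    ModuleCat.ofHom ((LinearMap.snd Λ K N).comp e.toLinearMap)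
  let i2 : ModuleCat.of Λ N ⟶ ModuleCat.of Λ M :=
    ModuleCat.ofHom (e.symm.toLinearMap.comp (LinearMap.inr Λ K N))
  have hid : (p1 ≫ i1) + (p2 ≫ i2) = 𝟙 (ModuleCat.of Λ M) := by
    ext x
    show e.symm ((e x).1, 0) + e.symm (0, (e x).2) = x
    rw [← map_add]
    simp
  have h1 : T.map i1.op = 0 := hK.eq_zero_of_tgt _
  have h2 : T.map i2.op = 0 := hN.eq_zero_of_tgt _
  calc 𝟙 (T.obj (Opposite.op (ModuleCat.of Λ M)))
      = T.map (𝟙 (Opposite.op (ModuleCat.of Λ M))) := (T.map_id _).symm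
    _ = T.map ((p1 ≫ i1) + (p2 ≫ i2)).op := by rw [hid]; rfl
    _ = T.map ((p1 ≫ i1).op + (p2 ≫ i2).op) := by rw [op_add]
    _ = T.map (i1.op ≫ p1.op) + T.map (i2.op ≫ p2.op) := by rw [T.map_add]; rfl
    _ = T.map i1.op ≫ T.map p1.op + T.map i2.op ≫ T.map p2.op := by
        rw [T.map_comp, T.map_comp]
    _ = 0 := by rw [h1, h2]; simp

end AuxCat

/-- Let `T` be a contravariant additive left exact functor on left `Λ`-modules that carries
direct limits to inverse limits (i.e., as a functor on the opposite category, it preserves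
cofiltered limits).  If `T I = 0` for every left ideal `I` of `Λ`, then `T A = 0` for every
left `Λ`-module `A`. -/
theorem stmt6 {Λ Λ₁ : Type} [Ring Λ] [Ring Λ₁]
    (T : (ModuleCat.{0} Λ)ᵒᵖ ⥤ ModuleCat.{0} Λ₁) [T.Additive]
    [PreservesFiniteLimits T] [PreservesCofilteredLimits T]
    (hI : ∀ I : Ideal Λ, IsZero (T.obj (Opposite.op (ModuleCat.of Λ I)))) :
    ∀ A : ModuleCat.{0} Λ, IsZero (T.obj (Opposite.op A)) := by
  -- `T Λ = 0`, from the ideal `⊤`.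
  have hΛ : IsZero (T.obj (Opposite.op (ModuleCat.of Λ Λ))) := by
    refine (hI ⊤).of_iso (T.mapIso ?_)
    exact (Submodule.topEquiv (R := Λ) (M := Λ)).toModuleIso.op
  -- `T (Λ^n) = 0` for every `n`.
  have hfree : ∀ n : ℕ, IsZero (T.obj (Opposite.op (ModuleCat.of Λ (Fin n → Λ)))) := by
    intro n
    induction n with
    | zero =>
      exact T.map_isZero ((ModuleCat.isZero_of_subsingleton
        (ModuleCat.of Λ (Fin 0 → Λ))).op)
    | succ n ih =>
      refine aux_split T ?_ hΛ ih
      exact (LinearEquiv.funCongrLeft Λ Λ (finSuccEquiv n)).symm.trans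
        (LinearEquiv.piOptionEquivProd Λ)
  -- `T M = 0` for every finitely generated `M`.
  have hfg : ∀ (M : Type) (_ : AddCommGroup M) (_ : Module Λ M),
      Module.Finite Λ M → IsZero (T.obj (Opposite.op (ModuleCat.of Λ M))) := by
    intro M _ _ hfin
    obtain ⟨n, f, hf⟩ := Module.Finite.exists_fin' Λ M
    let g : ModuleCat.of Λ (Fin n → Λ) ⟶ ModuleCat.of Λ M := ModuleCat.ofHom f
    have hepi : Epi g := (ModuleCat.epi_iff_surjective g).mpr hf
    have hmono : Mono (T.map g.op) := T.map_mono g.op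
    exact aux_mono_zero (hfree n) (T.map g.op)
  intro A
  -- `A` is the filtered colimit of its finitely generated submodules.
  haveI : PreservesLimitsOfShape (FGSub A)ᵒᵖ T :=
    PreservesCofilteredLimitsOfSize.preserves_cofiltered_limits _
  have hL : IsLimit (T.mapCone (fgCocone A).op) := isLimitOfPreserves T (fgIsColimit A).op
  rw [IsZero.iff_id_eq_zero]
  refine hL.hom_ext fun j => ?_
  have hz : IsZero (T.obj (Opposite.op (ModuleCat.of Λ j.unop.1))) :=
    hfg j.unop.1 inferInstance inferInstance (Module.Finite.iff_fg.mpr j.unop.2)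
  exact hz.eq_of_tgt _ _
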